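/- (Quantile preservation at non-intervened nodes.) Consider a topologically ordered SCM over n real variables in which every slice u ↦ f i v u is strictly monotone increasing. Let u : Fin n → ℝ, let v = solve u be the factual instance, let C ⊆ Fin n and c : Fin n → ℝ, and let v* = solveC u be the counterfactual instance under do(C = c). Then for every i ∉ C, F_{ν i v*}(v* i) = F_{ν i v}(v i), both sides being equal to F_{μ i}(u i): the counterfactual value at each non-intervened node occupies the same conditional quantile, given its counterfactual parents, as the factual value does given its factual parents. -/
import Mathlib


open MeasureTheory

/-- The cumulative distribution function of a Borel measure on ℝ:
`F_m(x) = m((-∞, x])`. -/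
noncomputable def cdfOf (m : Measure ℝ) (x : ℝ) : ℝ := (m (Set.Iic x)).toReal


lemma cdf_map_strictMono (m : Measure ℝ) (g : ℝ → ℝ) (hg : StrictMono g) (x : ℝ) :
    cdfOf (Measure.map g m) (g x) = cdfOf m x := by
  unfold cdfOf
  rw [Measure.map_apply (hg.monotone.measurable) measurableSet_Iic]
  have : g ⁻¹' Set.Iic (g x) = Set.Iic x := by
    ext y; simp [Set.mem_preimage, hg.le_iff_le]
  rw [this]

/-- Quantile preservation at non-intervened nodes: in a topologically ordered SCM with
strictly increasing mechanism slices, with factual instance `v = solve u` and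
counterfactual instance `v* = solveC u` under `do(C = c)`, for every `i ∉ C` the
counterfactual value occupies the same conditional quantile given its counterfactual
parents as the factual value does given its factual parents:
`F_{ν i v*}(v* i) = F_{ν i v}(v i) = F_{μ i}(u i)`, where
`ν i p = Measure.map (f i p) (μ i)`. -/
theorem quantile_preserved_at_nonintervened (n : ℕ) (pa : Fin n → Finset (Fin n))
    (hpa : ∀ i : Fin n, ∀ j ∈ pa i, j < i)
    (f : Fin n → (Fin n → ℝ) → ℝ → ℝ)
    (hloc : ∀ i : Fin n, ∀ v w : Fin n → ℝ, (∀ j ∈ pa i, v j = w j) → f i v = f i w)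
    (hmono : ∀ (i : Fin n) (v : Fin n → ℝ), StrictMono (f i v))
    (μ : Fin n → Measure ℝ) [∀ i, IsProbabilityMeasure (μ i)]
    (solve : (Fin n → ℝ) → (Fin n → ℝ))
    (hsolve : ∀ (u : Fin n → ℝ) (i : Fin n), solve u i = f i (solve u) (u i))
    (C : Set (Fin n)) (c : Fin n → ℝ)
    (solveC : (Fin n → ℝ) → (Fin n → ℝ))
    (hsolveC : ∀ u : Fin n → ℝ,
      (∀ i ∈ C, solveC u i = c i) ∧ ∀ i ∉ C, solveC u i = f i (solveC u) (u i))
    (u : Fin n → ℝ) (i : Fin n) (hi : i ∉ C) :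
    cdfOf (Measure.map (f i (solveC u)) (μ i)) (solveC u i)
      = cdfOf (Measure.map (f i (solve u)) (μ i)) (solve u i)
    ∧ cdfOf (Measure.map (f i (solveC u)) (μ i)) (solveC u i) = cdfOf (μ i) (u i) := by
  constructor
  · rw [hsolve u i, (hsolveC u).2 i hi,
      cdf_map_strictMono (μ i) _ (hmono i (solveC u)) (u i),
      cdf_map_strictMono (μ i) _ (hmono i (solve u)) (u i)]
  · rw [(hsolveC u).2 i hi, cdf_map_strictMono (μ i) _ (hmono i (solveC u)) (u i)]
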